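/- Every flat geodesic of G meets the royal variety exactly once: for each β in the open unit disc there is a unique λ in the open unit disc with (βλ + conj(β), λ) of the form (2z, z²) for some z ∈ 𝔻. -/

import Mathlib

/-- Every flat geodesic of `G` meets the royal variety exactly once: for `β` in the open
unit disc there is a unique `λ ∈ 𝔻` with `(βλ + conj β, λ) = (2z, z²)` for some `z ∈ 𝔻`. -/
theorem stmt_5 (β : ℂ) (hβ : ‖β‖ < 1) :
    ∃! l : ℂ, ‖l‖ < 1 ∧ ∃ z : ℂ, ‖z‖ < 1 ∧
      (β * l + (starRingEnd ℂ) β, l) = (2 * z, z ^ 2) := by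
  have uniq : ∀ z₁ z₂ : ℂ, ‖z₁‖ < 1 → ‖z₂‖ < 1 →
      β * z₁ ^ 2 + (starRingEnd ℂ) β = 2 * z₁ →
      β * z₂ ^ 2 + (starRingEnd ℂ) β = 2 * z₂ → z₁ = z₂ := by
    intro z₁ z₂ h1 h2 e1 e2
    have h : (z₁ - z₂) * (β * (z₁ + z₂) - 2) = 0 := by linear_combination e1 - e2
    rcases mul_eq_zero.1 h with h | h
    · exact sub_eq_zero.1 h
    · exfalso
      have h2' : β * (z₁ + z₂) = 2 := by linear_combination h
      have h4 : ‖β * (z₁ + z₂)‖ = 2 := by rw [h2']; norm_num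
      rw [norm_mul] at h4
      have h5 := norm_add_le z₁ z₂
      nlinarith [norm_nonneg β, norm_nonneg (z₁ + z₂)]
  by_cases hb0 : β = 0
  · subst hb0
    refine ⟨0, ⟨by norm_num, 0, by norm_num, by norm_num⟩, ?_⟩
    rintro l ⟨hl, z, hz, he⟩
    rw [Prod.mk.injEq] at he
    obtain ⟨he1, he2⟩ := he
    have hz0 : z = 0 := by
      have : (0 : ℂ) = 2 * z := by simpa using he1
      linear_combination (-1/2 : ℂ) * this
    rw [he2, hz0]; ring
  · set r := ‖β‖ with hr
    have hr0 : 0 < r := norm_pos_iff.2 hb0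
    have h1r : 0 < 1 - r ^ 2 := by nlinarith
    set t := Real.sqrt (1 - r ^ 2) with htdef
    have ht2 : t ^ 2 = 1 - r ^ 2 := Real.sq_sqrt (le_of_lt h1r)
    have htpos : 0 < t := Real.sqrt_pos.2 h1r
    have htlt : t < 1 := by nlinarith
    set z : ℂ := (1 - (t : ℂ)) / β with hzdef
    have hkey : β * (starRingEnd ℂ) β = 1 - (t : ℂ) ^ 2 := by
      have h' : r ^ 2 = 1 - t ^ 2 := by linarith
      rw [Complex.mul_conj, Complex.normSq_eq_norm_sq, ← hr]
      exact_mod_cast h'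
    have hznorm : ‖z‖ < 1 := by
      rw [hzdef, norm_div]
      have : ‖(1 : ℂ) - (t : ℂ)‖ = 1 - t := by
        rw [show (1 : ℂ) - (t : ℂ) = ((1 - t : ℝ) : ℂ) by push_cast; ring,
          Complex.norm_real, Real.norm_eq_abs, abs_of_nonneg (by linarith : (0:ℝ) ≤ 1 - t)]
      rw [this, ← hr, div_lt_one hr0]
      nlinarith [mul_pos htpos (by linarith : (0:ℝ) < 1 - t)]
    have heq : β * z ^ 2 + (starRingEnd ℂ) β = 2 * z := by
      rw [hzdef]
      field_simp
      linear_combination hkey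
    refine ⟨z ^ 2, ⟨?_, z, hznorm, by rw [Prod.mk.injEq]; exact ⟨heq, rfl⟩⟩, ?_⟩
    · rw [norm_pow]; nlinarith [norm_nonneg z]
    · rintro l ⟨hl, w, hw, he⟩
      rw [Prod.mk.injEq] at he
      obtain ⟨he1, he2⟩ := he
      rw [he2] at he1
      rw [he2, uniq w z hw hznorm he1 heq]
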